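/- Let G be a connected chordal claw-free graph with clique tree T_G, rooted at a leaf R of T_G. Let A and B be max cliques of G such that A is not a descendant of B and B is not a descendant of A in the rooted tree T_G^R. If A ∩ B ≠ ∅, then A and B are the two children of a fork clique, i.e., A and B have a common parent P in T_G^R and P is a fork clique. -/
import Mathlib


open SimpleGraph

/-- A graph is *chordal* if every cycle of length at least 4 has a chord, i.e. an
edge of the graph joining two vertices of the cycle that is not an edge of the cycle. -/
def IsChordal {V : Type*} (G : SimpleGraph V) : Prop :=
  ∀ (v : V) (c : G.Walk v v), c.IsCycle → 4 ≤ c.length →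
    ∃ u w : V, u ∈ c.support ∧ w ∈ c.support ∧ G.Adj u w ∧ s(u, w) ∉ c.edges

/-- A graph is *claw-free* if it has no induced subgraph isomorphic to the
complete bipartite graph `K_{1,3}`. -/
def ClawFree {V : Type*} (G : SimpleGraph V) : Prop :=
  IsEmpty (completeBipartiteGraph (Fin 1) (Fin 3) ↪g G)

/-- A *max clique* of `G` is a maximal clique. -/
def IsMaximalClique {V : Type*} (G : SimpleGraph V) (s : Set V) : Prop :=
  G.IsClique s ∧ ∀ t : Set V, G.IsClique t → s ⊆ t → s = t

/-- The type of max cliques of `G`. -/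
abbrev MaxClique {V : Type*} (G : SimpleGraph V) : Type _ :=
  {s : Set V // IsMaximalClique G s}

/-- `M_v`: the set of max cliques of `G` containing the vertex `v`. -/
def cliquesOf {V : Type*} (G : SimpleGraph V) (v : V) : Set (MaxClique G) :=
  {A | v ∈ A.1}

/-- A *clique tree* of `G`: a tree whose vertices are the max cliques of `G` such
that for every vertex `v` of `G` the subgraph induced by `M_v` is connected. -/
structure IsCliqueTree {V : Type*} (G : SimpleGraph V)
    (T : SimpleGraph (MaxClique G)) : Prop where
  isTree : T.IsTree
  induced_connected : ∀ v : V, (T.induce (cliquesOf G v)).Connected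

/-- The subgraph of `T` induced by `S` is a path in `T`: there is a path of `T`
whose vertices are exactly `S` and whose edges are exactly the edges of `T`
between vertices of `S`. -/
def InducedPath {M : Type*} (T : SimpleGraph M) (S : Set M) : Prop :=
  ∃ (a b : M) (p : T.Walk a b), p.IsPath ∧ (∀ A, A ∈ p.support ↔ A ∈ S) ∧
    ∀ A B, A ∈ S → B ∈ S → (T.Adj A B ↔ s(A, B) ∈ p.edges)

/-- `B` is a *star clique*: every vertex of `B` is contained in at most one
neighbor of `B` in the clique tree `T`. -/
def IsStarClique {V : Type*} (G : SimpleGraph V) (T : SimpleGraph (MaxClique G))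
    (B : MaxClique G) : Prop :=
  ∀ v ∈ B.1, ∀ A A' : MaxClique G, T.Adj B A → T.Adj B A' →
    v ∈ A.1 → v ∈ A'.1 → A = A'

/-- `B` is a *fork clique*: `B` has degree 3 in the clique tree `T`, for every
vertex `v ∈ B` there are two distinct neighbors `A, A'` of `B` with
`M_v = {B, A, A'}`, and for all distinct neighbors `A, A'` of `B` there is a
vertex `v` with `M_v = {B, A, A'}`. -/
def IsForkClique {V : Type*} (G : SimpleGraph V) (T : SimpleGraph (MaxClique G))
    (B : MaxClique G) : Prop :=
  (T.neighborSet B).ncard = 3 ∧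
  (∀ v ∈ B.1, ∃ A A' : MaxClique G, A ≠ A' ∧ T.Adj B A ∧ T.Adj B A' ∧
      cliquesOf G v = {B, A, A'}) ∧
  ∀ A A' : MaxClique G, T.Adj B A → T.Adj B A' → A ≠ A' →
      ∃ v : V, cliquesOf G v = {B, A, A'}

/-- The paths `T[S₁]` and `T[S₂]` *fork in `A`*: there is a fork
`(A', A, {A_P, A_Q})`, i.e. `A', A, A_P` are consecutive vertices of the path
`T[S₁]`, `A', A, A_Q` are consecutive vertices of the path `T[S₂]`,
`A_P` does not occur in `T[S₂]` and `A_Q` does not occur in `T[S₁]`. -/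
def ForkAt {M : Type*} (T : SimpleGraph M) (S₁ S₂ : Set M) (A : M) : Prop :=
  ∃ A' AP AQ : M, A' ∈ S₁ ∧ A' ∈ S₂ ∧ A ∈ S₁ ∧ A ∈ S₂ ∧ AP ∈ S₁ ∧ AQ ∈ S₂ ∧
    T.Adj A' A ∧ T.Adj A AP ∧ T.Adj A AQ ∧ A' ≠ AP ∧ A' ≠ AQ ∧ AP ∉ S₂ ∧ AQ ∉ S₁

/-- `A₁, A₂, A₃` form a *fork triangle* around `B`. -/
def FormsForkTriangle {V : Type*} (G : SimpleGraph V) (T : SimpleGraph (MaxClique G))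
    (A₁ A₂ A₃ B : MaxClique G) : Prop :=
  A₁ ≠ A₂ ∧ A₁ ≠ A₃ ∧ A₂ ≠ A₃ ∧ T.Adj B A₁ ∧ T.Adj B A₂ ∧ T.Adj B A₃ ∧
  (∃ u : V, cliquesOf G u = {A₁, B, A₂}) ∧
  (∃ v : V, cliquesOf G v = {A₂, B, A₃}) ∧
  (∃ w : V, cliquesOf G w = {A₃, B, A₁})

/-- `B` has a fork triangle. -/
def HasForkTriangle {V : Type*} (G : SimpleGraph V) (T : SimpleGraph (MaxClique G))
    (B : MaxClique G) : Prop :=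
  ∃ A₁ A₂ A₃ : MaxClique G, FormsForkTriangle G T A₁ A₂ A₃ B

/-- In the tree `T` rooted at `R`, `B` is an ancestor of `A` (equivalently, `A` is
a descendant of `B`): `B` lies on the unique path from `R` to `A`.  Every vertex
is an ancestor/descendant of itself. -/
def IsAncestor {M : Type*} (T : SimpleGraph M) (R A B : M) : Prop :=
  ∀ p : T.Walk R A, p.IsPath → B ∈ p.support

/-- In the tree `T` rooted at `R`, `A` is a child of `P`. -/
def IsChildOf {M : Type*} (T : SimpleGraph M) (R A P : M) : Prop :=
  T.Adj P A ∧ IsAncestor T R A P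

/-- `R` is a leaf of `T`: it has exactly one neighbor. -/
def IsLeaf {M : Type*} (T : SimpleGraph M) (R : M) : Prop :=
  (T.neighborSet R).ncard = 1

/-- The triple `(v₁, v₂, v₃)` *spans* the max clique `A`: `A` is the only max
clique of `G` containing `v₁`, `v₂` and `v₃`. -/
def Spans {V : Type*} (G : SimpleGraph V) (v₁ v₂ v₃ : V) (A : Set V) : Prop :=
  IsMaximalClique G A ∧ v₁ ∈ A ∧ v₂ ∈ A ∧ v₃ ∈ A ∧
    ∀ B : Set V, IsMaximalClique G B → v₁ ∈ B → v₂ ∈ B → v₃ ∈ B → B = A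

set_option linter.unusedSectionVars false
set_option maxHeartbeats 1000000

namespace Aux
variable {V : Type*} {G : SimpleGraph V}

lemma mc_subset_eq {A B : MaxClique G} (h : A.1 ⊆ B.1) : A = B :=
  Subtype.ext (A.2.2 B.1 B.2.1 h)

lemma mc_exists_diff {A B : MaxClique G} (h : A ≠ B) : ∃ x ∈ A.1, x ∉ B.1 := by
  by_contra hc
  push_neg at hc
  exact h (mc_subset_eq hc)

lemma exists_mc_superset (s : Set V) (hs : G.IsClique s) : ∃ A : MaxClique G, s ⊆ A.1 := by
  obtain ⟨m, hm, hmax⟩ := zorn_subset_nonempty {t : Set V | G.IsClique t}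
    (fun c hc hchain hne => ⟨⋃₀ c, by
      intro x hx y hy hxy
      obtain ⟨tx, htx, hxtx⟩ := hx
      obtain ⟨ty, hty, hyty⟩ := hy
      rcases hchain.total htx hty with h | h
      · exact (hc hty) (h hxtx) hyty hxy
      · exact (hc htx) hxtx (h hyty) hxy, fun s hs => Set.subset_sUnion_of_mem hs⟩) s hs
  exact ⟨⟨m, hmax.1, fun t ht hmt => hmt.antisymm (hmax.2 ht hmt)⟩, hm⟩

lemma exists_mc_mem (v : V) : ∃ A : MaxClique G, v ∈ A.1 := by
  obtain ⟨A, hA⟩ := exists_mc_superset {v} (G.isClique_singleton v)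
  exact ⟨A, hA rfl⟩

lemma adj_of_shared {A : MaxClique G} {x y : V} (hx : x ∈ A.1) (hy : y ∈ A.1) (hxy : x ≠ y) :
    G.Adj x y := A.2.1 hx hy hxy

lemma shared_of_adj {x y : V} (h : G.Adj x y) : ∃ A : MaxClique G, x ∈ A.1 ∧ y ∈ A.1 := by
  obtain ⟨A, hA⟩ := exists_mc_superset {x, y} (by
    rw [Set.pair_comm, ← Set.singleton_union, Set.union_comm]
    intro a ha b hb hab
    simp only [Set.mem_union, Set.mem_singleton_iff] at ha hb
    rcases ha with ha | ha <;> rcases hb with hb | hb <;> subst_vars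
    · exact absurd rfl hab
    · exact h
    · exact h.symm
    · exact absurd rfl hab)
  exact ⟨A, hA (Set.mem_insert _ _), hA (Set.mem_insert_of_mem _ rfl)⟩

lemma mc_nonempty [Nonempty V] (A : MaxClique G) : A.1.Nonempty := by
  rcases Set.eq_empty_or_nonempty A.1 with h | h
  · obtain ⟨v⟩ := ‹Nonempty V›
    have := A.2.2 {v} (G.isClique_singleton v) (by simp [h])
    exact ⟨v, by simp [this]⟩
  · exact h

/-- From a claw configuration, contradiction with claw-freeness. -/
lemma no_claw (hcf : ClawFree G) {c x y z : V}
    (hcx : G.Adj c x) (hcy : G.Adj c y) (hcz : G.Adj c z)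
    (hxy : ¬ G.Adj x y) (hxz : ¬ G.Adj x z) (hyz : ¬ G.Adj y z)
    (hxy' : x ≠ y) (hxz' : x ≠ z) (hyz' : y ≠ z) : False := by
  classical
  set w : Fin 3 → V := ![x, y, z] with hw
  have hadj : ∀ j, G.Adj c (w j) := by
    intro j; fin_cases j <;> simpa [hw]
  have hnadj : ∀ i j, ¬ G.Adj (w i) (w j) := by
    intro i j; fin_cases i <;> fin_cases j <;>
      simp only [hw, Matrix.cons_val_zero, Matrix.cons_val_one, Matrix.head_cons,
        Matrix.cons_val_two, Matrix.tail_cons] <;>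
      first
        | exact G.irrefl
        | assumption
        | exact fun h => hxy h.symm
        | exact fun h => hxz h.symm
        | exact fun h => hyz h.symm
  have hne : ∀ j, c ≠ w j := fun j => (hadj j).ne
  have hwinj : Function.Injective w := by
    intro i j h
    fin_cases i <;> fin_cases j <;> simp_all [hw] <;>
      first
        | rfl
        | exact absurd h hxy'
        | exact absurd h hxz'
        | exact absurd h hyz'
        | exact absurd h.symm hxy'
        | exact absurd h.symm hxz'
        | exact absurd h.symm hyz'
  refine hcf.elim ⟨⟨Sum.elim (fun _ => c) w, ?_⟩, ?_⟩
  · rintro (i | i) (j | j) h <;> simp only [Sum.elim_inl, Sum.elim_inr] at h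
    · exact congrArg Sum.inl (Subsingleton.elim i j)
    · exact absurd h (hne j)
    · exact absurd h.symm (hne i)
    · exact congrArg Sum.inr (hwinj h)
  · rintro (i | i) (j | j) <;>
      simp only [Function.Embedding.coeFn_mk, Sum.elim_inl, Sum.elim_inr, completeBipartiteGraph_adj,
        Sum.isLeft_inl, Sum.isRight_inl, Sum.isLeft_inr, Sum.isRight_inr, Bool.false_eq_true,
        true_and, and_true, false_and, and_false, or_false, false_or, or_self, iff_true,
        iff_false]
    · exact G.irrefl
    · exact hadj j
    · exact (hadj i).symm
    · exact hnadj i j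


section TreeAux
variable {M : Type*} [DecidableEq M] {T : SimpleGraph M}

variable {M : Type*} [DecidableEq M] {T : SimpleGraph M}

/-- The unique path between two vertices of a tree. -/
noncomputable def tp (hT : T.IsTree) (X Y : M) : T.Walk X Y :=
  (hT.existsUnique_path X Y).exists.choose

lemma tp_isPath (hT : T.IsTree) (X Y : M) : (tp hT X Y).IsPath :=
  (hT.existsUnique_path X Y).exists.choose_spec

lemma tp_eq (hT : T.IsTree) {X Y : M} {p : T.Walk X Y} (hp : p.IsPath) : p = tp hT X Y := by
  obtain ⟨q, _, hu⟩ := hT.existsUnique_path X Y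
  rw [hu p hp, hu _ (tp_isPath hT X Y)]

/-- Every walk between `X` and `Y` visits every vertex of the unique path. -/
lemma hits (hT : T.IsTree) {X Y Z : M} (h : Z ∈ (tp hT X Y).support) (w : T.Walk X Y) :
    Z ∈ w.support := by
  rw [← tp_eq hT w.bypass_isPath] at h
  exact w.support_bypass_subset h

lemma tp_self (hT : T.IsTree) (X : M) : (tp hT X X).support = [X] := by
  rw [← tp_eq hT (Walk.IsPath.nil (u := X) (G := T))]; rfl

lemma mem_tp_comm (hT : T.IsTree) {X Y Z : M} (h : Z ∈ (tp hT X Y).support) :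
    Z ∈ (tp hT Y X).support := by
  rw [← tp_eq hT (tp_isPath hT X Y).reverse, Walk.support_reverse, List.mem_reverse]
  exact h

lemma tp_adj (hT : T.IsTree) {X Y : M} (h : T.Adj X Y) :
    (tp hT X Y).support = [X, Y] := by
  rw [← tp_eq hT (p := Walk.cons h Walk.nil) (by simp [Walk.cons_isPath_iff, h.ne])]; rfl

lemma tp_take (hT : T.IsTree) {X Y Z : M} (h : Z ∈ (tp hT X Y).support) :
    (tp hT X Z).support ⊆ (tp hT X Y).support := by
  rw [← tp_eq hT ((tp_isPath hT X Y).takeUntil h)]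
  exact Walk.support_takeUntil_subset _ h

lemma tp_drop (hT : T.IsTree) {X Y Z : M} (h : Z ∈ (tp hT X Y).support) :
    (tp hT Z Y).support ⊆ (tp hT X Y).support := by
  rw [← tp_eq hT ((tp_isPath hT X Y).dropUntil h)]
  exact Walk.support_dropUntil_subset _ h

lemma tp_len_split (hT : T.IsTree) {X Y Z : M} (h : Z ∈ (tp hT X Y).support) :
    (tp hT X Z).length + (tp hT Z Y).length = (tp hT X Y).length := by
  conv_rhs => rw [← (tp hT X Y).take_spec h]
  rw [Walk.length_append,
    ← tp_eq hT ((tp_isPath hT X Y).takeUntil h),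
    ← tp_eq hT ((tp_isPath hT X Y).dropUntil h)]

lemma tp_len_comm (hT : T.IsTree) (X Y : M) : (tp hT X Y).length = (tp hT Y X).length := by
  rw [← tp_eq hT (tp_isPath hT X Y).reverse, Walk.length_reverse]

lemma eq_of_tp_length_zero (hT : T.IsTree) {X Y : M} (h : (tp hT X Y).length = 0) : X = Y :=
  Walk.eq_of_length_eq_zero h

/-- Antisymmetry of path membership. -/
lemma tp_antisymm (hT : T.IsTree) {R X Y : M} (hx : X ∈ (tp hT R Y).support)
    (hy : Y ∈ (tp hT R X).support) : X = Y := by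
  have h1 := tp_len_split hT hx
  have h2 := tp_len_split hT hy
  have := tp_len_comm hT X Y
  exact eq_of_tp_length_zero hT (by omega)

/-- In a tree, for distinct adjacent `X Y`: `X` is on the path from `Y` to `W` iff
`Y` is not on the path from `X` to `W`. -/
lemma side_iff (hT : T.IsTree) {X Y W : M} (hadj : T.Adj X Y) :
    X ∈ (tp hT Y W).support ↔ Y ∉ (tp hT X W).support := by
  constructor
  · intro hX hY
    -- split tp X W at Y; dropUntil is tp Y W which contains X; X also heads takeUntil
    have hnd := (tp_isPath hT X W).support_nodup
    have hsplit := (tp hT X W).take_spec hY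
    have hXdrop : X ∈ ((tp hT X W).dropUntil Y hY).support := by
      rw [tp_eq hT ((tp_isPath hT X W).dropUntil hY)]; exact hX
    have hXtake : X ∈ ((tp hT X W).takeUntil Y hY).support := Walk.start_mem_support _
    rw [← hsplit, Walk.support_append] at hnd
    have hdisj := List.disjoint_of_nodup_append hnd
    have : X ∈ ((tp hT X W).dropUntil Y hY).support.tail := by
      have hcons := ((tp hT X W).dropUntil Y hY).support_eq_cons
      rcases List.mem_cons.mp (by rw [← hcons]; exact hXdrop) with h | h
      · exact absurd h.symm hadj.ne'  -- X = Y impossible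
      · exact h
    exact hdisj hXtake this
  · intro hY
    have hpath : (Walk.cons hadj.symm (tp hT X W)).IsPath := by
      rw [Walk.cons_isPath_iff]
      exact ⟨tp_isPath hT X W, hY⟩
    have := tp_eq hT hpath
    rw [← this]
    simp

/-- Crossing an edge of the tree. -/
lemma cross (hT : T.IsTree) {X Y W1 W2 : M} (hadj : T.Adj X Y)
    (h1 : Y ∉ (tp hT X W1).support) (h2 : Y ∈ (tp hT X W2).support) :
    X ∈ (tp hT W1 W2).support ∧ Y ∈ (tp hT W1 W2).support := by
  have hX1 : X ∈ (tp hT Y W1).support := (side_iff hT hadj).mpr h1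
  have hX2 : X ∉ (tp hT Y W2).support := by
    intro hX
    have := (side_iff hT hadj).mp hX
    exact this h2
  constructor
  · -- every walk Y → W1 hits X; use walk tp Y W2 ++ tp W2 W1
    have := hits hT hX1 ((tp hT Y W2).append (tp hT W2 W1))
    rw [Walk.mem_support_append_iff] at this
    rcases this with h | h
    · exact absurd h hX2
    · exact mem_tp_comm hT h
  · -- every walk X → W2 hits Y; use walk tp X W1 ++ tp W1 W2
    have := hits hT h2 ((tp hT X W1).append (tp hT W1 W2))
    rw [Walk.mem_support_append_iff] at this
    rcases this with h | h
    · exact absurd h h1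
    · exact h

lemma getVert_mem {X Y : M} (p : T.Walk X Y) (i : ℕ) : p.getVert i ∈ p.support := by
  rw [Walk.mem_support_iff_exists_getVert]
  by_cases h : i ≤ p.length
  · exact ⟨i, rfl, h⟩
  · exact ⟨p.length, by rw [Walk.getVert_length, Walk.getVert_of_length_le p (by omega : p.length ≤ i)], le_rfl⟩

lemma getVert_inj {X Y : M} {p : T.Walk X Y} (hp : p.IsPath) {i j : ℕ}
    (hi : i ≤ p.length) (hj : j ≤ p.length) (h : p.getVert i = p.getVert j) : i = j := by
  induction p generalizing i j with
  | nil => simp at hi hj; omega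
  | cons hadj q ih =>
    rw [Walk.cons_isPath_iff] at hp
    match i, j with
    | 0, 0 => rfl
    | 0, (k+1) =>
      exfalso
      rw [Walk.getVert_zero, Walk.getVert_cons_succ] at h
      exact hp.2 (h ▸ getVert_mem q k)
    | (k+1), 0 =>
      exfalso
      rw [Walk.getVert_zero, Walk.getVert_cons_succ] at h
      exact hp.2 (h ▸ getVert_mem q k)
    | (k+1), (l+1) =>
      rw [Walk.getVert_cons_succ, Walk.getVert_cons_succ] at h
      simp only [Walk.length_cons] at hi hj
      have := ih hp.1 (by omega) (by omega) h
      omega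


end TreeAux

attribute [local instance] Classical.propDecidable

variable {V : Type*} {G : SimpleGraph V} {T : SimpleGraph (MaxClique G)}

/-- Convexity: all cliques on the tree path between two cliques containing `v` contain `v`. -/
lemma conv (hT : IsCliqueTree G T) {v : V} {A B Z : MaxClique G} (hA : v ∈ A.1) (hB : v ∈ B.1)
    (hZ : Z ∈ (tp hT.isTree A B).support) : v ∈ Z.1 := by
  obtain ⟨p⟩ := (hT.induced_connected v).preconnected
    (⟨A, hA⟩ : cliquesOf G v) (⟨B, hB⟩ : cliquesOf G v)
  have hw : Z ∈ (p.map (Embedding.induce (cliquesOf G v)).toHom).support :=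
    hits hT.isTree hZ _
  rw [Walk.support_map] at hw
  obtain ⟨⟨W, hWv⟩, _, hWZ⟩ := List.mem_map.mp hw
  exact hWZ ▸ hWv

/-- Adjacent cliques in the clique tree of a connected graph intersect. -/
lemma nbr_inter [Nonempty V] (hconn : G.Connected) (hT : IsCliqueTree G T)
    {X Y : MaxClique G} (hadj : T.Adj X Y) : ∃ u, u ∈ X.1 ∧ u ∈ Y.1 := by
  by_contra hc
  push_neg at hc
  set sideY : MaxClique G → Prop := fun W => Y ∈ (tp hT.isTree X W).support with hside
  have same : ∀ (u : V) (W1 W2 : MaxClique G), u ∈ W1.1 → u ∈ W2.1 →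
      sideY W1 → sideY W2 := by
    intro u W1 W2 h1 h2 hs1
    by_contra hs2
    obtain ⟨hX, hY⟩ := cross hT.isTree hadj hs2 hs1
    have huX := conv hT h1 h2 (mem_tp_comm hT.isTree hX)
    have huY := conv hT h1 h2 (mem_tp_comm hT.isTree hY)
    exact hc u huX huY
  set φ : V → Prop := fun u => ∃ W : MaxClique G, u ∈ W.1 ∧ sideY W with hφ
  have step : ∀ u w : V, G.Adj u w → φ u → φ w := by
    intro u w huw ⟨W, hW, hWs⟩
    obtain ⟨W', hu', hw'⟩ := shared_of_adj huw
    exact ⟨W', hw', same u W W' hW hu' hWs⟩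
  obtain ⟨x, hx⟩ := mc_nonempty X
  obtain ⟨y, hy⟩ := mc_nonempty Y
  obtain ⟨p⟩ := hconn.preconnected y x
  have hphiy : φ y := ⟨Y, hy, Walk.end_mem_support _⟩
  have walkstep : ∀ {a b : V} (q : G.Walk a b), φ a → φ b := by
    intro a b q
    induction q with
    | nil => exact id
    | cons h q ih => exact fun ha => ih (step _ _ h ha)
  have hphix : φ x := walkstep p hphiy
  obtain ⟨W, hxW, hWs⟩ := hphix
  have : sideY X := same x W X hxW hx hWs
  rw [hside] at this
  simp only [tp_self] at this
  exact hadj.ne (List.mem_singleton.mp this).symm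


section Sep
variable {V : Type*} {G : SimpleGraph V} {T : SimpleGraph (MaxClique G)}

lemma mem_tp_mid (hT : T.IsTree) {X P Y : MaxClique G} (hXY : X ≠ Y)
    (aX : T.Adj P X) (aY : T.Adj P Y) : P ∈ (tp hT X Y).support := by
  classical
  have hpath : (Walk.cons aX.symm (Walk.cons aY Walk.nil)).IsPath := by
    simp [Walk.cons_isPath_iff, aX.ne', aY.ne, hXY]
  rw [← tp_eq hT hpath]
  simp

/-- Separation: a clique on the path between `X` and `Y` separates private vertices. -/
lemma sep (hT : IsCliqueTree G T) {X Y Z : MaxClique G} (hZ : Z ∈ (tp hT.isTree X Y).support)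
    {x y : V} (hx : x ∈ X.1) (hxZ : x ∉ Z.1) (hy : y ∈ Y.1) (hyZ : y ∉ Z.1) :
    ¬ G.Adj x y ∧ x ≠ y := by
  classical
  constructor
  · intro hadj
    obtain ⟨W, hxW, hyW⟩ := shared_of_adj hadj
    have h1 : Z ∉ (tp hT.isTree X W).support := fun h => hxZ (conv hT hx hxW h)
    have h2 : Z ∉ (tp hT.isTree Y W).support := fun h => hyZ (conv hT hy hyW h)
    have := hits hT.isTree hZ ((tp hT.isTree X W).append (tp hT.isTree W Y))
    rw [Walk.mem_support_append_iff] at this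
    rcases this with h | h
    · exact h1 h
    · exact h2 (mem_tp_comm hT.isTree h)
  · rintro rfl
    exact hxZ (conv hT hx hy hZ)

/-- Private vertices of adjacent cliques are non-adjacent. -/
lemma nbr (hT : IsCliqueTree G T) {X Y : MaxClique G} (hadj : T.Adj X Y) {x y : V}
    (hx : x ∈ X.1) (hxY : x ∉ Y.1) (hy : y ∈ Y.1) (hyX : y ∉ X.1) :
    ¬ G.Adj x y ∧ x ≠ y := by
  classical
  constructor
  · intro hadjxy
    obtain ⟨W, hxW, hyW⟩ := shared_of_adj hadjxy
    have h1 : Y ∉ (tp hT.isTree X W).support := fun h => hxY (conv hT hx hxW h)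
    have h2 : X ∉ (tp hT.isTree Y W).support := fun h => hyX (conv hT hy hyW h)
    exact h2 ((side_iff hT.isTree hadj).mpr h1)
  · rintro rfl
    exact hyX hx

/-- For `x` in clique `P` and `a` a private vertex of a neighbour `A` of `P`:
`x` is adjacent to `a` iff `x ∈ A`. -/
lemma padj (hT : IsCliqueTree G T) {P A : MaxClique G} (hadj : T.Adj P A) {a x : V}
    (ha : a ∈ A.1) (haP : a ∉ P.1) (hx : x ∈ P.1) : G.Adj x a ↔ x ∈ A.1 := by
  classical
  constructor
  · intro h
    obtain ⟨W, hxW, haW⟩ := shared_of_adj h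
    have h1 : P ∉ (tp hT.isTree A W).support := fun hh => haP (conv hT ha haW hh)
    have hpath : (Walk.cons hadj (tp hT.isTree A W)).IsPath := by
      rw [Walk.cons_isPath_iff]
      exact ⟨tp_isPath _ _ _, h1⟩
    have hA : A ∈ (tp hT.isTree P W).support := by
      rw [← tp_eq hT.isTree hpath]
      simp
    exact conv hT hx hxW hA
  · intro h
    exact adj_of_shared h ha (fun he => haP (he ▸ hx))

/-- No vertex lies in three distinct neighbours of a clique. -/
lemma star (hcf : ClawFree G) (hT : IsCliqueTree G T) {P X Y Z : MaxClique G}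
    (hXY : X ≠ Y) (hXZ : X ≠ Z) (hYZ : Y ≠ Z)
    (aX : T.Adj P X) (aY : T.Adj P Y) (aZ : T.Adj P Z) {v : V}
    (hvX : v ∈ X.1) (hvY : v ∈ Y.1) (hvZ : v ∈ Z.1) : False := by
  classical
  obtain ⟨a, haX, haP⟩ := mc_exists_diff (Ne.symm aX.ne)
  obtain ⟨b, hbY, hbP⟩ := mc_exists_diff (Ne.symm aY.ne)
  obtain ⟨c, hcZ, hcP⟩ := mc_exists_diff (Ne.symm aZ.ne)
  have hPXY := mem_tp_mid hT.isTree hXY aX aY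
  have hPXZ := mem_tp_mid hT.isTree hXZ aX aZ
  have hPYZ := mem_tp_mid hT.isTree hYZ aY aZ
  have hvP : v ∈ P.1 := conv hT hvX hvY hPXY
  obtain ⟨nab, neab⟩ := sep hT hPXY haX haP hbY hbP
  obtain ⟨nac, neac⟩ := sep hT hPXZ haX haP hcZ hcP
  obtain ⟨nbc, nebc⟩ := sep hT hPYZ hbY hbP hcZ hcP
  exact no_claw hcf (adj_of_shared hvX haX (fun h => haP (h ▸ hvP)))
    (adj_of_shared hvY hbY (fun h => hbP (h ▸ hvP)))
    (adj_of_shared hvZ hcZ (fun h => hcP (h ▸ hvP)))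
    nab nac nbc neab neac nebc

end Sep

section Bend
variable {V : Type*} {G : SimpleGraph V} {T : SimpleGraph (MaxClique G)}

/-- Two vertices joined by paths of different lengths are equal... helper: unique path
lengths agree. -/
lemma tp_len_unique (hT : T.IsTree) {X Y : MaxClique G} {p q : T.Walk X Y}
    (hp : p.IsPath) (hq : q.IsPath) : p.length = q.length := by
  classical
  rw [tp_eq hT hp, tp_eq hT hq]

/-- **Bend lemma**: there is no path `X0-X1-X2-X3` in the clique tree, all containing a
common vertex `v`, such that `X2` has a further neighbour `C ∉ {X1, X3}`. -/
lemma bend [Nonempty V] (hconn : G.Connected) (hcf : ClawFree G) (hT : IsCliqueTree G T)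
    {X0 X1 X2 X3 C : MaxClique G}
    (a01 : T.Adj X0 X1) (a12 : T.Adj X1 X2) (a23 : T.Adj X2 X3)
    (d02 : X0 ≠ X2) (d03 : X0 ≠ X3) (d13 : X1 ≠ X3)
    (aC : T.Adj X2 C) (hC1 : C ≠ X1) (hC3 : C ≠ X3)
    {v : V} (h0 : v ∈ X0.1) (h1 : v ∈ X1.1) (h2 : v ∈ X2.1) (h3 : v ∈ X3.1) : False := by
  classical
  have tree := hT.isTree
  -- path membership facts
  have m1_02 : X1 ∈ (tp tree X0 X2).support := mem_tp_mid tree d02 a01.symm a12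
  -- C is distinct from X0
  have hC0 : C ≠ X0 := by
    rintro rfl
    rw [tp_adj tree aC.symm] at m1_02
    simp only [List.mem_cons, List.not_mem_nil, or_false] at m1_02
    rcases m1_02 with h | h
    · exact hC1 h.symm
    · exact a12.ne h
  have m2_13 : X2 ∈ (tp tree X1 X3).support := mem_tp_mid tree d13 a12.symm a23
  have m1_03 : X1 ∈ (tp tree X0 X3).support := by
    have hpath : (Walk.cons a01 (Walk.cons a12 (Walk.cons a23 Walk.nil))).IsPath := by
      simp [Walk.cons_isPath_iff, a01.ne, a12.ne, a23.ne, d02, d03, d13]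
    rw [← tp_eq tree hpath]; simp
  have m2_03 : X2 ∈ (tp tree X0 X3).support := by
    have hpath : (Walk.cons a01 (Walk.cons a12 (Walk.cons a23 Walk.nil))).IsPath := by
      simp [Walk.cons_isPath_iff, a01.ne, a12.ne, a23.ne, d02, d03, d13]
    rw [← tp_eq tree hpath]; simp
  have m2_0C : X2 ∈ (tp tree X0 C).support := by
    have hpath : (Walk.cons a01 (Walk.cons a12 (Walk.cons aC Walk.nil))).IsPath := by
      simp [Walk.cons_isPath_iff, a01.ne, a12.ne, aC.ne, d02, hC0.symm, hC1.symm]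
    rw [← tp_eq tree hpath]; simp
  have m2_1C : X2 ∈ (tp tree X1 C).support := mem_tp_mid tree hC1.symm a12.symm aC
  have m2_3C : X2 ∈ (tp tree X3 C).support := mem_tp_mid tree hC3.symm a23 aC
  -- private vertices
  obtain ⟨a, haX0, haX1⟩ := mc_exists_diff a01.ne
  obtain ⟨c, hcX3, hcX2⟩ := mc_exists_diff (Ne.symm a23.ne)
  obtain ⟨w, hwC, hwX2⟩ := mc_exists_diff (Ne.symm aC.ne)
  have haX2 : a ∉ X2.1 := fun h => haX1 (conv hT haX0 h m1_02)
  -- v is in none of the private positions needed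
  by_cases hcase : ∃ b, b ∈ X1.1 ∪ X2.1 ∧ b ∉ X0.1 ∧ b ∉ X3.1
  · obtain ⟨b, hb12, hb0, hb3⟩ := hcase
    have hvP2 : v ∈ X2.1 := h2
    have vadja : G.Adj v a := adj_of_shared h0 haX0 (fun h => haX1 (h ▸ h1))
    have vadjc : G.Adj v c := adj_of_shared h3 hcX3 (fun h => hcX2 (h ▸ h2))
    have vadjb : G.Adj v b := by
      rcases hb12 with hb | hb
      · exact adj_of_shared h1 hb (fun h => hb0 (h ▸ h0))
      · exact adj_of_shared h2 hb (fun h => hb0 (h ▸ h0))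
    obtain ⟨nac, neac⟩ := sep hT m2_03 haX0 haX2 hcX3 hcX2
    have hab : ¬ G.Adj a b ∧ a ≠ b := by
      by_cases hb1 : b ∈ X1.1
      · exact nbr hT a01 haX0 haX1 hb1 hb0
      · have hb2 : b ∈ X2.1 := hb12.resolve_left hb1
        exact sep hT m1_02 haX0 haX1 hb2 hb1
    have hbc : ¬ G.Adj b c ∧ b ≠ c := by
      by_cases hb2 : b ∈ X2.1
      · exact nbr hT a23 hb2 hb3 hcX3 hcX2
      · have hb1 : b ∈ X1.1 := hb12.resolve_right hb2
        exact sep hT m2_13 hb1 hb2 hcX3 hcX2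
    exact no_claw hcf vadja vadjb vadjc hab.1 nac hbc.1 hab.2 neac hbc.2
  · push_neg at hcase
    -- every vertex of X1 ∪ X2 lies in X0 ∪ X3
    have cover : ∀ x, x ∈ X1.1 ∪ X2.1 → x ∉ X0.1 → x ∈ X3.1 := hcase
    -- claw A: u ∈ X0 ∩ X1 ∩ X2 ∩ C gives a claw
    have clawA : ∀ u, u ∈ X0.1 → u ∈ X2.1 → u ∈ C.1 → False := by
      intro u hu0 hu2 huC
      have hu1 : u ∈ X1.1 := conv hT hu0 hu2 m1_02
      by_cases hl : ∃ l, l ∈ X1.1 ∧ l ∉ X0.1 ∧ l ∉ C.1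
      · obtain ⟨l, hl1, hl0, hlC⟩ := hl
        have uadja : G.Adj u a := adj_of_shared hu0 haX0 (fun h => haX1 (h ▸ hu1))
        have uadjw : G.Adj u w := adj_of_shared huC hwC (fun h => hwX2 (h ▸ hu2))
        have uadjl : G.Adj u l := adj_of_shared hu1 hl1 (fun h => hl0 (h ▸ hu0))
        obtain ⟨naw, neaw⟩ := sep hT m2_0C haX0 haX2 hwC hwX2
        obtain ⟨nal, neal⟩ := nbr hT a01 haX0 haX1 hl1 hl0
        have hwl : ¬ G.Adj w l ∧ w ≠ l := by
          by_cases hl2 : l ∈ X2.1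
          · have := nbr hT aC hl2 hlC hwC hwX2
            exact ⟨fun h => this.1 h.symm, this.2.symm⟩
          · have := sep hT m2_1C hl1 hl2 hwC hwX2
            exact ⟨fun h => this.1 h.symm, this.2.symm⟩
        exact no_claw hcf uadja uadjw uadjl naw nal hwl.1 neaw neal hwl.2
      · push_neg at hl
        obtain ⟨p, hp1, hp0⟩ := mc_exists_diff (Ne.symm a01.ne)
        have hpC : p ∈ C.1 := hl p hp1 hp0
        have hp3 : p ∈ X3.1 := cover p (Or.inl hp1) hp0
        exact star hcf hT d13 hC1.symm hC3.symm a12.symm a23 aC hp1 hp3 hpC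
    -- get u ∈ X2 ∩ C
    obtain ⟨u, hu2, huC⟩ := nbr_inter hconn hT aC
    by_cases hu0 : u ∈ X0.1
    · exact clawA u hu0 hu2 huC
    · obtain ⟨q, hq2, hq3⟩ := mc_exists_diff (Ne.symm (Ne.symm a23.ne))
      have hq0 : q ∈ X0.1 := by
        by_contra hq0
        exact hq3 (cover q (Or.inr hq2) hq0)
      by_cases hqC : q ∈ C.1
      · exact clawA q hq0 hq2 hqC
      · -- claw B with centre u ∈ X2 ∩ X3 ∩ C (u ∉ X0, hence u ∉ X1)
        have hu3 : u ∈ X3.1 := cover u (Or.inr hu2) hu0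
        have hu1 : u ∉ X1.1 := fun hu1 =>
          star hcf hT d13 hC1.symm hC3.symm a12.symm a23 aC hu1 hu3 huC
        have uadjw : G.Adj u w := adj_of_shared huC hwC (fun h => hwX2 (h ▸ hu2))
        have uadjc : G.Adj u c := adj_of_shared hu3 hcX3 (fun h => hcX2 (h ▸ hu2))
        have uadjq : G.Adj u q := adj_of_shared hu2 hq2 (fun h => hq3 (h ▸ hu3))
        obtain ⟨nwc, newc⟩ := sep hT m2_3C hcX3 hcX2 hwC hwX2
        obtain ⟨nwq, newq⟩ := nbr hT aC hq2 hqC hwC hwX2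
        obtain ⟨ncq, necq⟩ := nbr hT a23 hq2 hq3 hcX3 hcX2
        exact no_claw hcf uadjw uadjc uadjq (fun h => nwc h.symm) (fun h => nwq h.symm)
          (fun h => ncq h.symm) newc.symm newq.symm necq.symm

end Bend

section Rooted
variable {M : Type*} [DecidableEq M] {T : SimpleGraph M}

/-- `X` is an ancestor of `Y` in the tree rooted at `R`. -/
def anc (hT : T.IsTree) (R X Y : M) : Prop := X ∈ (tp hT R Y).support

lemma anc_self (hT : T.IsTree) (R X : M) : anc hT R X X := Walk.end_mem_support _

lemma anc_antisymm (hT : T.IsTree) {R X Y : M} (h1 : anc hT R X Y) (h2 : anc hT R Y X) :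
    X = Y := tp_antisymm hT h1 h2

lemma anc_trans (hT : T.IsTree) {R X Y Z : M} (h1 : anc hT R X Y) (h2 : anc hT R Y Z) :
    anc hT R X Z := tp_take hT h2 h1

lemma adj_anc (hT : T.IsTree) {R X Y : M} (hadj : T.Adj X Y) :
    anc hT R X Y ∨ anc hT R Y X := by
  by_cases h : Y ∈ (tp hT X R).support
  · exact Or.inr (mem_tp_comm hT h)
  · left
    have hpath : (Walk.cons hadj.symm (tp hT X R)).IsPath := by
      rw [Walk.cons_isPath_iff]; exact ⟨tp_isPath _ _ _, h⟩
    have hX : X ∈ (tp hT Y R).support := by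
      rw [← tp_eq hT hpath]; simp
    exact mem_tp_comm hT hX

lemma parent_spec (hT : T.IsTree) {R X : M} (hXR : X ≠ R) :
    ∃ P, T.Adj P X ∧ anc hT R P X ∧ P ≠ X := by
  set q := tp hT X R with hq
  have hlen : 0 < q.length := by
    rcases Nat.eq_zero_or_pos q.length with h | h
    · exact absurd (Walk.eq_of_length_eq_zero h) hXR
    · exact h
  refine ⟨q.getVert 1, ?_, ?_, ?_⟩
  · have := q.adj_getVert_succ (i := 0) hlen
    rw [Walk.getVert_zero] at this
    exact this.symm
  · exact mem_tp_comm hT (getVert_mem q 1)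
  · intro h
    have := getVert_inj (tp_isPath hT X R) (i := 1) (j := 0) hlen (by omega)
      (by rw [Walk.getVert_zero, ← hq, h])
    omega

lemma mem_path_anc (hT : T.IsTree) {R A B X : M} (hX : X ∈ (tp hT A B).support) :
    anc hT R X A ∨ anc hT R X B := by
  by_cases h : X ∈ (tp hT R A).support
  · exact Or.inl h
  · right
    have := hits hT hX ((tp hT R A).reverse.append (tp hT R B))
    rw [Walk.mem_support_append_iff] at this
    rcases this with hh | hh
    · rw [Walk.support_reverse, List.mem_reverse] at hh
      exact absurd hh h
    · exact hh

/-- A vertex with two distinct neighbours is not a leaf. -/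
lemma not_leaf (hT : T.IsTree) [Finite M] {R X Y P : M}
    (hR : (T.neighborSet R).ncard = 1) (hX : T.Adj P X) (hY : T.Adj P Y) (hXY : X ≠ Y) :
    P ≠ R := by
  intro h
  rw [h] at hX hY
  have : 1 < (T.neighborSet R).ncard := by
    rw [Set.one_lt_ncard_iff (Set.toFinite _)]
    exact ⟨X, Y, hX, hY, hXY⟩
  omega

end Rooted

section Meet
variable {V : Type*} {G : SimpleGraph V} {T : SimpleGraph (MaxClique G)}

attribute [local instance] Classical.propDecidable

lemma meet [Nonempty V] [Finite (MaxClique G)] (hconn : G.Connected) (hcf : ClawFree G)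
    (hT : IsCliqueTree G T) {R A B : MaxClique G}
    (hR : (T.neighborSet R).ncard = 1)
    (hAB : ¬ anc hT.isTree R B A) (hBA : ¬ anc hT.isTree R A B)
    {v : V} (hvA : v ∈ A.1) (hvB : v ∈ B.1) :
    ∃ P : MaxClique G, T.Adj P A ∧ T.Adj P B ∧ anc hT.isTree R P A ∧ anc hT.isTree R P B ∧
      v ∈ P.1 := by
  classical
  have tree := hT.isTree
  set p := tp tree A B with hp
  set n := p.length with hn
  set Z : ℕ → MaxClique G := fun j => p.getVert j with hZfun
  have hZ0 : Z 0 = A := p.getVert_zero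
  have hZn : Z n = B := p.getVert_length
  have hvall : ∀ j, v ∈ (Z j).1 := fun j => conv hT hvA hvB (getVert_mem p j)
  have hadjZ : ∀ j, j < n → T.Adj (Z j) (Z (j+1)) := fun j h => p.adj_getVert_succ h
  have hinj : ∀ i j, i ≤ n → j ≤ n → Z i = Z j → i = j := fun i j hi hj h =>
    getVert_inj (tp_isPath tree A B) hi hj h
  have hAneB : A ≠ B := by
    rintro rfl
    exact hAB (anc_self tree R A)
  have hn0 : n ≠ 0 := fun h => hAneB (by rw [← hZ0, ← hZn, h])
  have hn1 : n ≠ 1 := by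
    intro h
    have hadj : T.Adj A B := by
      have h01 := hadjZ 0 (by omega)
      rw [hZ0] at h01
      rw [← hZn, h]
      exact h01
    rcases adj_anc tree (R := R) hadj with h' | h'
    · exact hBA h'
    · exact hAB h'
  have base : anc tree R (Z 1) (Z 0) := by
    rcases adj_anc tree (R := R) (hadjZ 0 (by omega)) with h2 | h2
    · rcases mem_path_anc tree (R := R) (X := Z 1) (getVert_mem p 1) with h | h
      · rwa [hZ0]
      · exact absurd (anc_trans tree (hZ0 ▸ h2) h) hBA
    · exact h2
  by_cases h3 : 3 ≤ n
  · exfalso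
    have step : ∀ i, i + 2 ≤ n → anc tree R (Z (i+1)) (Z i) →
        anc tree R (Z (i+2)) (Z (i+1)) := by
      intro i hi IH
      have hne02 : Z (i+2) ≠ Z i := fun h => by
        have := hinj _ _ (by omega) (by omega) h; omega
      have hnR : Z (i+1) ≠ R :=
        not_leaf tree hR (hadjZ (i+1) (by omega)) (hadjZ i (by omega)).symm hne02
      obtain ⟨P', aP', ancP', neP'⟩ := parent_spec tree hnR
      have hP'prev : P' ≠ Z i := by
        rintro rfl
        have := anc_antisymm tree ancP' IH
        have := hinj _ _ (by omega) (by omega) this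
        omega
      by_cases hP'next : P' = Z (i+2)
      · rw [← hP'next]; exact ancP'
      · exfalso
        by_cases h4 : i + 3 ≤ n
        · exact bend hconn hcf hT
            ((hadjZ (i+2) (by omega)).symm) ((hadjZ (i+1) (by omega)).symm)
            ((hadjZ i (by omega)).symm)
            (fun h => by have := hinj _ _ (by omega) (by omega) h; omega)
            (fun h => by have := hinj _ _ (by omega) (by omega) h; omega)
            (fun h => by have := hinj _ _ (by omega) (by omega) h; omega)
            aP'.symm hP'next hP'prev
            (hvall _) (hvall _) (hvall _) (hvall _)
        · obtain ⟨k, rfl⟩ : ∃ k, i = k + 1 := ⟨i - 1, by omega⟩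
          exact bend hconn hcf hT
            (hadjZ k (by omega)) (hadjZ (k+1) (by omega)) (hadjZ (k+2) (by omega))
            (fun h => by have := hinj _ _ (by omega) (by omega) h; omega)
            (fun h => by have := hinj _ _ (by omega) (by omega) h; omega)
            (fun h => by have := hinj _ _ (by omega) (by omega) h; omega)
            aP'.symm hP'prev hP'next
            (hvall _) (hvall _) (hvall _) (hvall _)
    have chain : ∀ i, i + 1 ≤ n → anc tree R (Z (i+1)) (Z i) := by
      intro i
      induction i with
      | zero => exact fun _ => base
      | succ k ih => exact fun hk => step k (by omega) (ih (by omega))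
    have down : ∀ i, i ≤ n → anc tree R (Z i) (Z 0) := by
      intro i
      induction i with
      | zero => exact fun _ => anc_self tree R (Z 0)
      | succ k ih => exact fun hk => anc_trans tree (chain k (by omega)) (ih (by omega))
    have := down n le_rfl
    rw [hZ0, hZn] at this
    exact hAB this
  · have hn2 : n = 2 := by omega
    have hadj1A : T.Adj (Z 1) A := by
      have := hadjZ 0 (by omega)
      rw [hZ0] at this
      exact this.symm
    have hadj1B : T.Adj (Z 1) B := by
      have := hadjZ 1 (by omega)
      rwa [show (1 + 1 : ℕ) = n from hn2.symm, hZn] at this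
    have hanc1A : anc tree R (Z 1) A := by rw [← hZ0]; exact base
    refine ⟨Z 1, hadj1A, hadj1B, hanc1A, ?_, hvall 1⟩
    rcases adj_anc tree (R := R) hadj1B with h | h
    · exact h
    · exact absurd (anc_trans tree h hanc1A) hAB

end Meet

section Fork
variable {V : Type*} {G : SimpleGraph V} {T : SimpleGraph (MaxClique G)}

attribute [local instance] Classical.propDecidable

/-- Trees have no triangles. -/
lemma tri (tree : T.IsTree) {P X Y : MaxClique G}
    (h1 : T.Adj P X) (h2 : T.Adj X Y) (h3 : T.Adj P Y) : False := by
  have hpA : (Walk.cons h1 (Walk.cons h2 Walk.nil)).IsPath := by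
    simp [Walk.cons_isPath_iff, h1.ne, h2.ne, h3.ne]
  have hpB : (Walk.cons h3 Walk.nil).IsPath := by
    simp [Walk.cons_isPath_iff, h3.ne]
  have := (tp_eq tree hpA).trans (tp_eq tree hpB).symm
  have := congrArg Walk.length this
  simp at this

lemma adj_of_len_one {X Y : MaxClique G} {p : T.Walk X Y} (h : p.length = 1) :
    T.Adj X Y := by
  have h1 : p.getVert 1 = Y := by rw [← h, p.getVert_length]
  have := p.adj_getVert_succ (i := 0) (by omega)
  rwa [p.getVert_zero, h1] at this

variable [Nonempty V] (hconn : G.Connected) (hcf : ClawFree G) (hT : IsCliqueTree G T)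
variable {P A B : MaxClique G} (dAB : A ≠ B) (aA : T.Adj P A) (aB : T.Adj P B)
variable {v : V} (hvA : v ∈ A.1) (hvB : v ∈ B.1)

include hconn hcf hT dAB aA aB hvA hvB

omit hconn in
lemma vmemP : v ∈ P.1 := conv hT hvA hvB (mem_tp_mid hT.isTree dAB aA aB)

omit hconn in
/-- Every vertex of `P` lies in `A` or `B`. -/
lemma P_sub_AB : ∀ u ∈ P.1, u ∉ A.1 → u ∈ B.1 := by
  intro u huP huA
  by_contra huB
  obtain ⟨a, haA, haP⟩ := mc_exists_diff (Ne.symm aA.ne)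
  obtain ⟨b, hbB, hbP⟩ := mc_exists_diff (Ne.symm aB.ne)
  have hvP : v ∈ P.1 := vmemP hcf hT dAB aA aB hvA hvB
  have hneva : v ≠ a := fun h => haP (h ▸ hvP)
  have hnevb : v ≠ b := fun h => hbP (h ▸ hvP)
  have hnevu : v ≠ u := fun h => huA (h ▸ hvA)
  obtain ⟨nab, neab⟩ := sep hT (mem_tp_mid hT.isTree dAB aA aB) haA haP hbB hbP
  have nau : ¬ G.Adj a u := fun h => huA ((padj hT aA haA haP huP).mp h.symm)
  have nbu : ¬ G.Adj b u := fun h => huB ((padj hT aB hbB hbP huP).mp h.symm)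
  exact no_claw hcf (adj_of_shared hvA haA hneva) (adj_of_shared hvB hbB hnevb)
    (adj_of_shared hvP huP hnevu) nab nau nbu neab (fun h => haP (h ▸ huP))
    (fun h => hbP (h ▸ huP))

/-- For any third neighbour `Z` of `P`, there is a vertex in `P ∩ Z ∩ B`. -/
lemma third_nbr_B {Z : MaxClique G} (aZ : T.Adj P Z) (hZA : Z ≠ A) (hZB : Z ≠ B) :
    ∃ x, x ∈ P.1 ∧ x ∈ Z.1 ∧ x ∈ B.1 := by
  by_contra hno
  push_neg at hno
  obtain ⟨u, huP, huZ⟩ := nbr_inter hconn hT aZ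
  have huB : u ∉ B.1 := fun h => hno u huP huZ h
  have huA : u ∈ A.1 := by
    by_contra huA
    exact huB (P_sub_AB hcf hT dAB aA aB hvA hvB u huP huA)
  obtain ⟨t, htP, htA⟩ := mc_exists_diff aA.ne
  have htZ : t ∉ Z.1 := fun h =>
    hno t htP h (P_sub_AB hcf hT dAB aA aB hvA hvB t htP htA)
  obtain ⟨a0, ha0A, ha0P⟩ := mc_exists_diff (Ne.symm aA.ne)
  obtain ⟨z0, hz0Z, hz0P⟩ := mc_exists_diff (Ne.symm aZ.ne)
  obtain ⟨naz, neaz⟩ := sep hT (mem_tp_mid hT.isTree (Ne.symm hZA) aA aZ) ha0A ha0P hz0Z hz0P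
  have nat : ¬ G.Adj a0 t := fun h => htA ((padj hT aA ha0A ha0P htP).mp h.symm)
  have nzt : ¬ G.Adj z0 t := fun h => htZ ((padj hT aZ hz0Z hz0P htP).mp h.symm)
  exact no_claw hcf (adj_of_shared huA ha0A (fun h => ha0P (h ▸ huP)))
    (adj_of_shared huZ hz0Z (fun h => hz0P (h ▸ huP)))
    (adj_of_shared huP htP (fun h => htA (h ▸ huA)))
    naz nat nzt neaz (fun h => ha0P (h ▸ htP)) (fun h => hz0P (h ▸ htP))

/-- `P` has no fourth neighbour. -/
lemma deg_three {Z D : MaxClique G} (aZ : T.Adj P Z) (aD : T.Adj P D)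
    (hZA : Z ≠ A) (hZB : Z ≠ B) (hDA : D ≠ A) (hDB : D ≠ B) (hZD : Z ≠ D) : False := by
  -- x ∈ P ∩ Z ∩ A  (use the B-side lemma with A and B swapped)
  obtain ⟨x, hxP, hxZ, hxA⟩ := third_nbr_B hconn hcf hT dAB.symm aB aA hvB hvA aZ hZB hZA
  obtain ⟨y, hyP, hyD, hyB⟩ := third_nbr_B hconn hcf hT dAB aA aB hvA hvB aD hDA hDB
  have hyA : y ∉ A.1 := fun h =>
    star hcf hT dAB hDA.symm hDB.symm aA aB aD h hyB hyD
  have hyZ : y ∉ Z.1 := fun h =>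
    star hcf hT (Ne.symm hZB) (Ne.symm hDB) hZD aB aZ aD hyB h hyD
  obtain ⟨w0, hw0Z, hw0P⟩ := mc_exists_diff (Ne.symm aZ.ne)
  obtain ⟨a0, ha0A, ha0P⟩ := mc_exists_diff (Ne.symm aA.ne)
  have nwy : ¬ G.Adj w0 y := fun h => hyZ ((padj hT aZ hw0Z hw0P hyP).mp h.symm)
  obtain ⟨nwa, newa⟩ := sep hT (mem_tp_mid hT.isTree (Ne.symm hZA).symm aZ aA) hw0Z hw0P ha0A ha0P
  have nya : ¬ G.Adj y a0 := fun h => hyA ((padj hT aA ha0A ha0P hyP).mp h)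
  exact no_claw hcf (adj_of_shared hxZ hw0Z (fun h => hw0P (h ▸ hxP)))
    (adj_of_shared hxP hyP (fun h => hyA (h ▸ hxA)))
    (adj_of_shared hxA ha0A (fun h => ha0P (h ▸ hxP)))
    (fun h => nwy h) nwa (fun h => nya h)
    (fun h => hyZ (h ▸ hw0Z)) newa (fun h => ha0P (h.symm ▸ hyP))

/-- A vertex of `P ∩ A` not in `B` lies in the third neighbour `Z`. -/
lemma in_third {Z : MaxClique G} (aZ : T.Adj P Z) (hZA : Z ≠ A) (hZB : Z ≠ B)
    {u : V} (huP : u ∈ P.1) (huA : u ∈ A.1) (huB : u ∉ B.1) : u ∈ Z.1 := by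
  by_contra huZ
  obtain ⟨x, hxP, hxZ, hxB⟩ := third_nbr_B hconn hcf hT dAB aA aB hvA hvB aZ hZA hZB
  obtain ⟨b0, hb0B, hb0P⟩ := mc_exists_diff (Ne.symm aB.ne)
  obtain ⟨z0, hz0Z, hz0P⟩ := mc_exists_diff (Ne.symm aZ.ne)
  have nub : ¬ G.Adj u b0 := fun h => huB ((padj hT aB hb0B hb0P huP).mp h)
  have nuz : ¬ G.Adj u z0 := fun h => huZ ((padj hT aZ hz0Z hz0P huP).mp h)
  obtain ⟨nbz, nebz⟩ := sep hT (mem_tp_mid hT.isTree (Ne.symm hZB) aB aZ) hb0B hb0P hz0Z hz0P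
  exact no_claw hcf (adj_of_shared hxP huP (fun h => huB (h.symm ▸ hxB)))
    (adj_of_shared hxB hb0B (fun h => hb0P (h ▸ hxP)))
    (adj_of_shared hxZ hz0Z (fun h => hz0P (h ▸ hxP)))
    nub nuz nbz (fun h => hb0P (h ▸ huP)) (fun h => hz0P (h ▸ huP)) nebz

end Fork

section Exact
variable {V : Type*} {G : SimpleGraph V} {T : SimpleGraph (MaxClique G)}

attribute [local instance] Classical.propDecidable

lemma Mu_exact [Nonempty V] (hconn : G.Connected) (hcf : ClawFree G) (hT : IsCliqueTree G T)
    {P X Y W : MaxClique G} (dXY : X ≠ Y) (dXW : X ≠ W) (dYW : Y ≠ W)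
    (aX : T.Adj P X) (aY : T.Adj P Y) (aW : T.Adj P W)
    {u : V} (huP : u ∈ P.1) (huX : u ∈ X.1) (huY : u ∈ Y.1) :
    cliquesOf G u = {P, X, Y} := by
  classical
  ext E
  simp only [cliquesOf, Set.mem_setOf_eq, Set.mem_insert_iff, Set.mem_singleton_iff]
  constructor
  · intro huE
    by_contra hE
    push_neg at hE
    obtain ⟨hEP, hEX, hEY⟩ := hE
    by_cases hadj : T.Adj P E
    · exact star hcf hT dXY (Ne.symm hEX) (Ne.symm hEY) aX aY hadj huX huY huE
    · have hlen0 : (tp hT.isTree P E).length ≠ 0 := fun h =>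
        hEP (Walk.eq_of_length_eq_zero h).symm
      have hlen1 : (tp hT.isTree P E).length ≠ 1 := fun h => hadj (adj_of_len_one h)
      have haPN : T.Adj P ((tp hT.isTree P E).getVert 1) := by
        have := (tp hT.isTree P E).adj_getVert_succ (i := 0) (by omega)
        rwa [(tp hT.isTree P E).getVert_zero] at this
      have huN : u ∈ ((tp hT.isTree P E).getVert 1).1 :=
        conv hT huP huE (getVert_mem _ 1)
      have key : ∀ X' Y' : MaxClique G, T.Adj P X' → T.Adj P Y' → X' ≠ Y' → W ≠ X' →
          W ≠ Y' → u ∈ X'.1 → u ∈ Y'.1 → (tp hT.isTree P E).getVert 1 = X' → False := by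
        intro X' Y' aX' aY' dX'Y' hWX' hWY' huX' huY' hN
        have haX'X2 : T.Adj X' ((tp hT.isTree P E).getVert 2) := by
          have := (tp hT.isTree P E).adj_getVert_succ (i := 1) (by omega)
          rwa [hN] at this
        have huX2 : u ∈ ((tp hT.isTree P E).getVert 2).1 :=
          conv hT huP huE (getVert_mem _ 2)
        have hX2P : (tp hT.isTree P E).getVert 2 ≠ P := by
          intro h
          have := getVert_inj (tp_isPath hT.isTree P E) (i := 2) (j := 0) (by omega) (by omega)
            (by rw [h, (tp hT.isTree P E).getVert_zero])
          omega
        have hX2Y' : (tp hT.isTree P E).getVert 2 ≠ Y' := fun h =>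
          tri hT.isTree aX' (h ▸ haX'X2) aY'
        exact bend hconn hcf hT haX'X2.symm aX'.symm aY' hX2P hX2Y' dX'Y' aW hWX' hWY'
          huX2 huX' huP huY'
      have hNmem : (tp hT.isTree P E).getVert 1 = X ∨ (tp hT.isTree P E).getVert 1 = Y := by
        by_contra h
        push_neg at h
        exact star hcf hT dXY (Ne.symm h.1) (Ne.symm h.2) aX aY haPN huX huY huN
      rcases hNmem with h | h
      · exact key X Y aX aY dXY (Ne.symm dXW) (Ne.symm dYW) huX huY h
      · exact key Y X aY aX dXY.symm (Ne.symm dYW) (Ne.symm dXW) huY huX h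
  · rintro (rfl | rfl | rfl)
    · exact huP
    · exact huX
    · exact huY

end Exact
end Aux

/-- Let `G` be a connected chordal claw-free graph with clique
tree `T` rooted at a leaf `R`.  Let `A` and `B` be max cliques such that `A` is
not a descendant of `B` and `B` is not a descendant of `A` in the rooted tree.
If `A ∩ B ≠ ∅`, then `A` and `B` are the two children of a fork clique: they
have a common parent `P` which is a fork clique. -/
theorem intersecting_incomparable_children_of_fork {V : Type*} [Fintype V]
    [Nonempty V] (G : SimpleGraph V) (hconn : G.Connected) (hch : IsChordal G)
    (hcf : ClawFree G) (T : SimpleGraph (MaxClique G)) (hT : IsCliqueTree G T)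
    (R : MaxClique G) (hR : IsLeaf T R) (A B : MaxClique G)
    (hAB : ¬ IsAncestor T R A B) (hBA : ¬ IsAncestor T R B A)
    (hint : (A.1 ∩ B.1).Nonempty) :
    ∃ P : MaxClique G, IsChildOf T R A P ∧ IsChildOf T R B P ∧
      IsForkClique G T P := by
    classical
  obtain ⟨v, hvA, hvB⟩ := hint
  have tree := hT.isTree
  have hanc : ∀ X Y : MaxClique G, IsAncestor T R X Y ↔ Aux.anc tree R Y X := by
    intro X Y
    constructor
    · intro h
      exact h _ (Aux.tp_isPath tree R X)
    · intro h p hp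
      rwa [Aux.tp_eq tree hp]
  have hAB' : ¬ Aux.anc tree R B A := fun h => hAB ((hanc A B).mpr h)
  have hBA' : ¬ Aux.anc tree R A B := fun h => hBA ((hanc B A).mpr h)
  have hRn : (T.neighborSet R).ncard = 1 := hR
  obtain ⟨P, aPA, aPB, ancPA, ancPB, hvP⟩ := Aux.meet hconn hcf hT hRn hAB' hBA' hvA hvB
  have dAB : A ≠ B := by
    rintro rfl
    exact hAB' (Aux.anc_self tree R A)
  have hPR : P ≠ R := Aux.not_leaf tree hRn aPA aPB dAB
  obtain ⟨P', aP'P, ancP'P, neP'⟩ := Aux.parent_spec tree hPR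
  have aPP' : T.Adj P P' := aP'P.symm
  have hP'A : P' ≠ A := fun h => aPA.ne (Aux.anc_antisymm tree ancPA (h ▸ ancP'P))
  have hP'B : P' ≠ B := fun h => aPB.ne (Aux.anc_antisymm tree ancPB (h ▸ ancP'P))
  have hnbrs : T.neighborSet P = {A, B, P'} := by
    ext Z
    simp only [SimpleGraph.mem_neighborSet, Set.mem_insert_iff, Set.mem_singleton_iff]
    constructor
    · intro hZ
      by_contra h
      push_neg at h
      exact Aux.deg_three hconn hcf hT dAB aPA aPB hvA hvB hZ aPP' h.1 h.2.1 hP'A hP'B h.2.2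
    · rintro (rfl | rfl | rfl)
      exacts [aPA, aPB, aPP']
  refine ⟨P, ⟨aPA, (hanc A P).mpr ancPA⟩, ⟨aPB, (hanc B P).mpr ancPB⟩, ?_, ?_, ?_⟩
  · rw [hnbrs]
    exact Set.ncard_eq_three.mpr ⟨A, B, P', dAB, Ne.symm hP'A, Ne.symm hP'B, rfl⟩
  · intro u huP
    by_cases huA : u ∈ A.1 <;> by_cases huB : u ∈ B.1
    · exact ⟨A, B, dAB, aPA, aPB,
        Aux.Mu_exact hconn hcf hT dAB (Ne.symm hP'A) (Ne.symm hP'B) aPA aPB aPP' huP huA huB⟩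
    · have huP' := Aux.in_third hconn hcf hT dAB aPA aPB hvA hvB aPP' hP'A hP'B huP huA huB
      exact ⟨A, P', Ne.symm hP'A, aPA, aPP',
        Aux.Mu_exact hconn hcf hT (Ne.symm hP'A) dAB hP'B aPA aPP' aPB huP huA huP'⟩
    · have huP' := Aux.in_third hconn hcf hT dAB.symm aPB aPA hvB hvA aPP' hP'B hP'A huP huB huA
      exact ⟨B, P', Ne.symm hP'B, aPB, aPP',
        Aux.Mu_exact hconn hcf hT (Ne.symm hP'B) dAB.symm hP'A aPB aPP' aPA huP huB huP'⟩
    · exact absurd (Aux.P_sub_AB hcf hT dAB aPA aPB hvA hvB u huP huA) huB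
  · intro X X' haX haX' hne
    have hXm : X ∈ T.neighborSet P := haX
    have hX'm : X' ∈ T.neighborSet P := haX'
    rw [hnbrs] at hXm hX'm
    simp only [Set.mem_insert_iff, Set.mem_singleton_iff] at hXm hX'm
    obtain ⟨x, hxP, hxP', hxA⟩ :=
      Aux.third_nbr_B hconn hcf hT dAB.symm aPB aPA hvB hvA aPP' hP'B hP'A
    obtain ⟨y, hyP, hyP', hyB⟩ :=
      Aux.third_nbr_B hconn hcf hT dAB aPA aPB hvA hvB aPP' hP'A hP'B
    rcases hXm with rfl | rfl | rfl <;> rcases hX'm with rfl | rfl | rfl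
    · exact absurd rfl hne
    · exact ⟨v, Aux.Mu_exact hconn hcf hT dAB (Ne.symm hP'A) (Ne.symm hP'B)
        aPA aPB aPP' hvP hvA hvB⟩
    · exact ⟨x, Aux.Mu_exact hconn hcf hT (Ne.symm hP'A) dAB hP'B aPA aPP' aPB hxP hxA hxP'⟩
    · exact ⟨v, Aux.Mu_exact hconn hcf hT dAB.symm (Ne.symm hP'B) (Ne.symm hP'A)
        aPB aPA aPP' hvP hvB hvA⟩
    · exact absurd rfl hne
    · exact ⟨y, Aux.Mu_exact hconn hcf hT (Ne.symm hP'B) dAB.symm hP'A aPB aPP' aPA hyP hyB hyP'⟩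
    · exact ⟨x, Aux.Mu_exact hconn hcf hT hP'A hP'B dAB aPP' aPA aPB hxP hxP' hxA⟩
    · exact ⟨y, Aux.Mu_exact hconn hcf hT hP'B hP'A dAB.symm aPP' aPB aPA hyP hyP' hyB⟩
    · exact absurd rfl hne
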